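/- Let ν be a finite positive even Borel measure on ℝ such that the function λ ↦ ∫_ℝ e^{λx} dν(x) is bounded on ℝ (equivalently, λ ↦ ∫_ℝ cosh(λx) dν(x) is bounded). Then ν(ℝ \ {0}) = 0, i.e. ν is a nonnegative multiple of the Dirac measure at 0. -/

import Mathlib

open MeasureTheory Filter

/-- If `ν` is a finite positive even Borel measure on ℝ whose two-sided Laplace
transform `t ↦ ∫ e^{t x} dν(x)` is bounded on ℝ, then `ν` vanishes off the origin,
i.e. `ν` is a nonnegative multiple of the Dirac measure at `0`. -/
theorem bounded_laplace_transform_measure_is_dirac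
    (ν : Measure ℝ) [IsFiniteMeasure ν]
    (h_even : ν.map (fun x => -x) = ν)
    (h_bdd : ∃ C : ℝ, ∀ t : ℝ,
      ∫⁻ x : ℝ, ENNReal.ofReal (Real.exp (t * x)) ∂ν ≤ ENNReal.ofReal C) :
    ν ({0}ᶜ : Set ℝ) = 0 := by
  obtain ⟨C, hC⟩ := h_bdd
  -- Step 1: the measure of [ε, ∞) is zero for every ε > 0.
  have key : ∀ ε : ℝ, 0 < ε → ν (Set.Ici ε) = 0 := by
    intro ε hε
    have hb : ∀ n : ℕ, ν (Set.Ici ε) ≤ ENNReal.ofReal C / ENNReal.ofReal (Real.exp n) := by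
      intro n
      have hmul : ENNReal.ofReal (Real.exp n) * ν (Set.Ici ε) ≤ ENNReal.ofReal C := by
        have h1 : ENNReal.ofReal (Real.exp n) * ν (Set.Ici ε)
            = ∫⁻ _ in Set.Ici ε, ENNReal.ofReal (Real.exp n) ∂ν := by
          rw [setLIntegral_const, mul_comm]
        rw [h1]
        have hmeas : Measurable fun x : ℝ => ENNReal.ofReal (Real.exp ((n / ε) * x)) :=
          (Real.measurable_exp.comp (measurable_const.mul measurable_id)).ennreal_ofReal
        calc ∫⁻ _ in Set.Ici ε, ENNReal.ofReal (Real.exp n) ∂ν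
            ≤ ∫⁻ x in Set.Ici ε, ENNReal.ofReal (Real.exp ((n / ε) * x)) ∂ν := by
              refine setLIntegral_mono hmeas fun x hx => ?_
              refine ENNReal.ofReal_le_ofReal (Real.exp_le_exp.2 ?_)
              have hx' : ε ≤ x := hx
              have : (n / ε) * ε ≤ (n / ε) * x := by
                apply mul_le_mul_of_nonneg_left hx'
                positivity
              calc (n : ℝ) = (n / ε) * ε := by field_simp
                _ ≤ (n / ε) * x := this
          _ ≤ ∫⁻ x, ENNReal.ofReal (Real.exp ((n / ε) * x)) ∂ν :=
              setLIntegral_le_lintegral _ _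
          _ ≤ ENNReal.ofReal C := hC _
      rw [ENNReal.le_div_iff_mul_le (by simp [Real.exp_pos]) (by simp)]
      rwa [mul_comm]
    have htend : Tendsto (fun n : ℕ => ENNReal.ofReal C / ENNReal.ofReal (Real.exp n))
        atTop (nhds 0) := by
      have hexp : Tendsto (fun n : ℕ => ENNReal.ofReal (Real.exp n)) atTop (nhds ⊤) :=
        ENNReal.tendsto_ofReal_atTop.comp
          (Real.tendsto_exp_atTop.comp tendsto_natCast_atTop_atTop)
      have hinv : Tendsto (fun n : ℕ => (ENNReal.ofReal (Real.exp n))⁻¹) atTop (nhds 0) := by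
        simpa using ENNReal.tendsto_inv_iff.2 hexp
      simpa [div_eq_mul_inv] using
        ENNReal.Tendsto.const_mul hinv (Or.inr ENNReal.ofReal_ne_top)
    have := ge_of_tendsto' htend hb
    simpa using le_antisymm this zero_le
  -- Step 2: the measure of (-∞, -ε] is zero, by evenness.
  have key' : ∀ ε : ℝ, 0 < ε → ν (Set.Iic (-ε)) = 0 := by
    intro ε hε
    have hmap : ν (Set.Iic (-ε)) = ν (Set.Ici ε) := by
      conv_lhs => rw [← h_even]
      rw [Measure.map_apply (measurable_neg) measurableSet_Iic]
      congr 1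
      ext x
      simp [Set.mem_preimage, neg_le_neg_iff]
    rw [hmap]
    exact key ε hε
  -- Step 3: {0}ᶜ is covered by countably many such sets.
  have hcover : ({0}ᶜ : Set ℝ) ⊆
      ⋃ n : ℕ, (Set.Ici (1 / (n + 1 : ℝ)) ∪ Set.Iic (-(1 / (n + 1 : ℝ)))) := by
    intro x hx
    have hx0 : x ≠ 0 := hx
    have hxabs : 0 < |x| := abs_pos.mpr hx0
    obtain ⟨n, hn⟩ := exists_nat_gt (1 / |x|)
    refine Set.mem_iUnion.2 ⟨n, ?_⟩
    have h1 : 1 / ((n : ℝ) + 1) < |x| := by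
      rw [div_lt_iff₀ (by positivity)]
      rw [div_lt_iff₀ hxabs] at hn
      nlinarith [hxabs]
    rcases le_or_gt 0 x with h | h
    · left
      have : |x| = x := abs_of_nonneg h
      exact le_of_lt (this ▸ h1)
    · right
      have : |x| = -x := abs_of_neg h
      have := this ▸ h1
      simp only [Set.mem_Iic]
      linarith
  refine measure_mono_null hcover (measure_iUnion_null fun n => ?_)
  rw [measure_union_null_iff]
  exact ⟨key _ (by positivity), key' _ (by positivity)⟩
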